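/- The Laplace kernel on ℝⁿ is positive semidefinite: for every σ ≠ 0, every q ∈ ℕ, all points x_1,…,x_q ∈ ℝⁿ and all real coefficients α_1,…,α_q, one has ∑_{i=1}^q ∑_{j=1}^q α_i α_j exp(−‖x_i − x_j‖₂ / σ²) ≥ 0. -/

import Mathlib

open Finset MeasureTheory Set

/-- Gram-type kernels are PSD. -/
lemma gram_psd {q : ℕ} {A : Type*} [Fintype A] (φ : Fin q → A → ℝ) (α : Fin q → ℝ) :
    0 ≤ ∑ i, ∑ j, α i * α j * (∑ a, φ i a * φ j a) := by
  have h : ∑ i, ∑ j, α i * α j * (∑ a, φ i a * φ j a)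
      = ∑ a, (∑ i, α i * φ i a) ^ 2 := by
    calc ∑ i, ∑ j, α i * α j * (∑ a, φ i a * φ j a)
        = ∑ i, ∑ j, ∑ a, (α i * φ i a) * (α j * φ j a) := by
          refine Finset.sum_congr rfl fun i _ => Finset.sum_congr rfl fun j _ => ?_
          rw [Finset.mul_sum]; exact Finset.sum_congr rfl fun a _ => by ring
      _ = ∑ i, ∑ a, ∑ j, (α i * φ i a) * (α j * φ j a) :=
          Finset.sum_congr rfl fun i _ => Finset.sum_comm
      _ = ∑ a, ∑ i, ∑ j, (α i * φ i a) * (α j * φ j a) := Finset.sum_comm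
      _ = ∑ a, (∑ i, α i * φ i a) ^ 2 := by
          refine Finset.sum_congr rfl fun a _ => ?_
          rw [sq, Finset.sum_mul_sum]
  rw [h]
  exact Finset.sum_nonneg fun a _ => sq_nonneg _

/-- Powers of Gram-type kernels are Gram-type. -/
lemma gram_pow {q : ℕ} {A : Type*} [Fintype A] (φ : Fin q → A → ℝ) (i j : Fin q) (k : ℕ) :
    (∑ a, φ i a * φ j a) ^ k
      = ∑ g : Fin k → A, (∏ t, φ i (g t)) * (∏ t, φ j (g t)) := by
  rw [show ((∑ a, φ i a * φ j a) ^ k) = ∏ _t : Fin k, (∑ a, φ i a * φ j a) by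
        rw [Finset.prod_const, Finset.card_univ, Fintype.card_fin],
     Finset.prod_univ_sum]
  exact Finset.sum_congr rfl fun g _ => by rw [Finset.prod_mul_distrib]

lemma one_sub_exp_neg_le (s : ℝ) : 1 - Real.exp (-s) ≤ s := by
  nlinarith [Real.add_one_le_exp (-s)]

lemma one_sub_exp_neg_nonneg {s : ℝ} (hs : 0 ≤ s) : 0 ≤ 1 - Real.exp (-s) := by
  nlinarith [Real.exp_le_one_iff.mpr (neg_nonpos.mpr hs)]

lemma integ_aux (a : ℝ) (ha : 0 ≤ a) :
    IntegrableOn (fun t : ℝ => (1 - Real.exp (-(a * t))) * t ^ (-(3/2) : ℝ)) (Ioi 0) := by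
  have hmeas : Measurable (fun t : ℝ => (1 - Real.exp (-(a * t))) * t ^ (-(3/2) : ℝ)) := by
    fun_prop
  have h1 : IntegrableOn (fun t : ℝ => (1 - Real.exp (-(a * t))) * t ^ (-(3/2) : ℝ)) (Ioc 0 1) := by
    have hint : IntegrableOn (fun t : ℝ => a * t ^ (-(1/2) : ℝ)) (Ioc 0 1) := by
      refine Integrable.const_mul ?_ a
      exact (intervalIntegral.intervalIntegrable_rpow' (a := 0) (b := 1)
        (r := (-(1/2) : ℝ)) (by norm_num)).1
    refine Integrable.mono hint hmeas.aestronglyMeasurable ?_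
    filter_upwards [ae_restrict_mem measurableSet_Ioc] with t ht
    obtain ⟨ht0, ht1⟩ := ht
    have hat : 0 ≤ a * t := mul_nonneg ha ht0.le
    rw [Real.norm_eq_abs, Real.norm_eq_abs, abs_of_nonneg
      (mul_nonneg (one_sub_exp_neg_nonneg hat) (Real.rpow_nonneg ht0.le _)),
      abs_of_nonneg (mul_nonneg ha (Real.rpow_nonneg ht0.le _))]
    calc (1 - Real.exp (-(a * t))) * t ^ (-(3/2) : ℝ)
        ≤ (a * t) * t ^ (-(3/2) : ℝ) := by
          exact mul_le_mul_of_nonneg_right (one_sub_exp_neg_le _) (Real.rpow_nonneg ht0.le _)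
      _ = a * t ^ (-(1/2) : ℝ) := by
          rw [mul_assoc]
          congr 1
          have : t * t ^ (-(3/2) : ℝ) = t ^ ((1 : ℝ) + -(3/2)) := by
            rw [Real.rpow_add ht0, Real.rpow_one]
          rw [this]
          norm_num
  have h2 : IntegrableOn (fun t : ℝ => (1 - Real.exp (-(a * t))) * t ^ (-(3/2) : ℝ)) (Ioi 1) := by
    have hint : IntegrableOn (fun t : ℝ => t ^ (-(3/2) : ℝ)) (Ioi 1) :=
      integrableOn_Ioi_rpow_of_lt (by norm_num) one_pos
    refine Integrable.mono hint hmeas.aestronglyMeasurable ?_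
    filter_upwards [ae_restrict_mem measurableSet_Ioi] with t ht
    have ht0 : (0:ℝ) < t := lt_trans one_pos ht
    have hat : 0 ≤ a * t := mul_nonneg ha ht0.le
    rw [Real.norm_eq_abs, Real.norm_eq_abs, abs_of_nonneg
      (mul_nonneg (one_sub_exp_neg_nonneg hat) (Real.rpow_nonneg ht0.le _)),
      abs_of_nonneg (Real.rpow_nonneg ht0.le _)]
    have : 1 - Real.exp (-(a * t)) ≤ 1 := by
      have := Real.exp_pos (-(a * t)); linarith
    nlinarith [Real.rpow_nonneg ht0.le (-(3/2) : ℝ)]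
  rw [show Ioi (0:ℝ) = Set.Ioc 0 1 ∪ Set.Ioi 1 from (Set.Ioc_union_Ioi_eq_Ioi zero_le_one).symm]
  exact h1.union h2

/-- exp of a nonnegative multiple of a Gram-type kernel is PSD. -/
lemma exp_gram_psd {q : ℕ} {A : Type*} [Fintype A] (φ : Fin q → A → ℝ) (α : Fin q → ℝ)
    {c : ℝ} (hc : 0 ≤ c) :
    0 ≤ ∑ i, ∑ j, α i * α j * Real.exp (c * ∑ a, φ i a * φ j a) := by
  -- partial sums of the exponential series
  set K : Fin q → Fin q → ℝ := fun i j => ∑ a, φ i a * φ j a with hK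
  have key : ∀ N : ℕ, 0 ≤ ∑ i, ∑ j, α i * α j * ∑ k ∈ Finset.range N, (c * K i j) ^ k / (Nat.factorial k : ℝ) := by
    intro N
    have swap : ∑ i, ∑ j, α i * α j * ∑ k ∈ Finset.range N, (c * K i j) ^ k / (Nat.factorial k : ℝ)
        = ∑ k ∈ Finset.range N, (c ^ k / (Nat.factorial k : ℝ)) * ∑ i, ∑ j, α i * α j * K i j ^ k := by
      calc ∑ i, ∑ j, α i * α j * ∑ k ∈ Finset.range N, (c * K i j) ^ k / (Nat.factorial k : ℝ)
          = ∑ i, ∑ j, ∑ k ∈ Finset.range N, (c ^ k / (Nat.factorial k : ℝ)) * (α i * α j * K i j ^ k) := by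
            refine Finset.sum_congr rfl fun i _ => Finset.sum_congr rfl fun j _ => ?_
            rw [Finset.mul_sum]
            exact Finset.sum_congr rfl fun k _ => by rw [mul_pow]; ring
        _ = ∑ i, ∑ k ∈ Finset.range N, ∑ j, (c ^ k / (Nat.factorial k : ℝ)) * (α i * α j * K i j ^ k) :=
            Finset.sum_congr rfl fun i _ => Finset.sum_comm
        _ = ∑ k ∈ Finset.range N, ∑ i, ∑ j, (c ^ k / (Nat.factorial k : ℝ)) * (α i * α j * K i j ^ k) :=
            Finset.sum_comm
        _ = _ := by
            refine Finset.sum_congr rfl fun k _ => ?_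
            rw [Finset.mul_sum]
            exact Finset.sum_congr rfl fun i _ => by rw [Finset.mul_sum]
    rw [swap]
    refine Finset.sum_nonneg fun k _ => mul_nonneg (by positivity) ?_
    have h0 := gram_psd (fun i (g : Fin k → A) => ∏ t, φ i (g t)) α
    refine h0.trans (le_of_eq ?_)
    refine Finset.sum_congr rfl fun i _ => Finset.sum_congr rfl fun j _ => ?_
    rw [gram_pow φ i j k]
  -- limit
  have hlim : Filter.Tendsto
      (fun N => ∑ i, ∑ j, α i * α j * ∑ k ∈ Finset.range N, (c * K i j) ^ k / (Nat.factorial k : ℝ))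
      Filter.atTop
      (nhds (∑ i, ∑ j, α i * α j * Real.exp (c * K i j))) := by
    refine tendsto_finset_sum _ fun i _ => tendsto_finset_sum _ fun j _ => ?_
    have h1 : HasSum (fun k => (c * K i j) ^ k / (Nat.factorial k : ℝ)) (Real.exp (c * K i j)) := by
      rw [Real.exp_eq_exp_ℝ]
      exact NormedSpace.expSeries_div_hasSum_exp (c * K i j)
    exact (h1.tendsto_sum_nat).const_mul _
  exact le_of_tendsto_of_tendsto' tendsto_const_nhds hlim key

open scoped MatrixOrder in
/-- A symmetric matrix with nonnegative quadratic form has a Gram representation. -/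
lemma psd_to_gram {q : ℕ} (M : Fin q → Fin q → ℝ)
    (hsymm : ∀ i j, M i j = M j i)
    (hpsd : ∀ β : Fin q → ℝ, 0 ≤ ∑ i, ∑ j, β i * β j * M i j) :
    ∃ B : Fin q → Fin q → ℝ, ∀ i j, M i j = ∑ a, B a i * B a j := by
  have hM : (Matrix.of M).PosSemidef := by
    refine Matrix.PosSemidef.of_dotProduct_mulVec_nonneg ?_ ?_
    · ext i j
      simp [Matrix.conjTranspose_apply, hsymm i j]
    · intro β
      have h := hpsd β
      simp only [dotProduct, Matrix.mulVec, Matrix.of_apply, star, Pi.star_apply,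
        star_trivial]
      calc (0:ℝ) ≤ ∑ i, ∑ j, β i * β j * M i j := h
        _ = ∑ i, β i * ∑ j, M i j * β j := by
            refine Finset.sum_congr rfl fun i _ => ?_
            rw [Finset.mul_sum]
            exact Finset.sum_congr rfl fun j _ => by ring
  obtain ⟨B, hB⟩ := CStarAlgebra.nonneg_iff_eq_star_mul_self.mp hM.nonneg
  refine ⟨fun a i => B a i, fun i j => ?_⟩
  have := congrArg (fun N => N i j) hB
  simpa [Matrix.mul_apply, Matrix.conjTranspose_apply, Matrix.star_apply] using this

/-- The Gaussian kernel is PSD. -/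
lemma gaussian_psd {n q : ℕ} (x : Fin q → EuclideanSpace ℝ (Fin n)) (α : Fin q → ℝ)
    {t : ℝ} (ht : 0 ≤ t) :
    0 ≤ ∑ i, ∑ j, α i * α j * Real.exp (-(t * ‖x i - x j‖ ^ 2)) := by
  have hinner : ∀ i j : Fin q, (inner ℝ (x i) (x j) : ℝ) = ∑ a, x i a * x j a := by
    intro i j
    rw [PiLp.inner_apply]
    simp [RCLike.inner_apply, conj_trivial]
    exact Finset.sum_congr rfl fun _ _ => mul_comm _ _
  have hexp : ∀ i j : Fin q, Real.exp (-(t * ‖x i - x j‖ ^ 2))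
      = Real.exp (-(t * ‖x i‖ ^ 2)) * Real.exp (-(t * ‖x j‖ ^ 2))
        * Real.exp ((2 * t) * ∑ a, x i a * x j a) := by
    intro i j
    rw [← hinner, ← Real.exp_add, ← Real.exp_add]
    congr 1
    rw [norm_sub_sq_real (x i) (x j)]
    ring
  calc (0:ℝ) ≤ ∑ i, ∑ j, (fun i => α i * Real.exp (-(t * ‖x i‖ ^ 2))) i
        * (fun i => α i * Real.exp (-(t * ‖x i‖ ^ 2))) j
        * Real.exp ((2 * t) * ∑ a, x i a * x j a) :=
      exp_gram_psd (fun i a => x i a) _ (by linarith)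
    _ = ∑ i, ∑ j, α i * α j * Real.exp (-(t * ‖x i - x j‖ ^ 2)) := by
      refine Finset.sum_congr rfl fun i _ => Finset.sum_congr rfl fun j _ => ?_
      rw [hexp i j]; ring

noncomputable def laplaceC : ℝ := ∫ t in Ioi (0:ℝ), (1 - Real.exp (-t)) * t ^ (-(3/2) : ℝ)

lemma laplaceC_pos : 0 < laplaceC := by
  rw [laplaceC]
  have hint : IntegrableOn (fun t : ℝ => (1 - Real.exp (-t)) * t ^ (-(3/2) : ℝ)) (Ioi 0) := by
    have := integ_aux 1 zero_le_one
    simpa using this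
  rw [setIntegral_pos_iff_support_of_nonneg_ae ?hnn hint]
  case hnn =>
    filter_upwards [ae_restrict_mem measurableSet_Ioi] with t ht
    exact mul_nonneg (one_sub_exp_neg_nonneg (le_of_lt ht)) (Real.rpow_nonneg (le_of_lt ht) _)
  have hsub : Ioi (0:ℝ) ⊆ Function.support (fun t : ℝ => (1 - Real.exp (-t)) * t ^ (-(3/2) : ℝ)) := by
    intro t ht
    have ht' : (0:ℝ) < t := ht
    have h1 : 0 < 1 - Real.exp (-t) := by
      have : Real.exp (-t) < 1 := Real.exp_lt_one_iff.mpr (by linarith)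
      linarith
    have h2 : 0 < t ^ (-(3/2) : ℝ) := Real.rpow_pos_of_pos ht' _
    exact ne_of_gt (mul_pos h1 h2)
  have : Function.support (fun t : ℝ => (1 - Real.exp (-t)) * t ^ (-(3/2) : ℝ)) ∩ Set.Ioi (0:ℝ) = Set.Ioi (0:ℝ) :=
    Set.inter_eq_self_of_subset_right hsub
  rw [this, Real.volume_Ioi]
  norm_num

lemma scaling (r : ℝ) (hr : 0 ≤ r) :
    ∫ t in Ioi (0:ℝ), (1 - Real.exp (-(r^2 * t))) * t ^ (-(3/2) : ℝ) = r * laplaceC := by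
  rcases eq_or_lt_of_le hr with rfl | hr
  · simp
  · have hr2 : 0 < r^2 := by positivity
    have key := integral_comp_mul_left_Ioi
      (fun s => (1 - Real.exp (-s)) * s ^ (-(3/2) : ℝ)) 0 hr2
    rw [mul_zero] at key
    -- key : ∫ t in Ioi 0, (1 - exp(-(r^2*t))) * (r^2*t)^(-(3/2)) = (r^2)⁻¹ • laplaceC
    have expand : ∀ t ∈ Ioi (0:ℝ),
        (1 - Real.exp (-(r^2 * t))) * (r^2 * t) ^ (-(3/2) : ℝ)
        = (r^2) ^ (-(3/2) : ℝ) * ((1 - Real.exp (-(r^2 * t))) * t ^ (-(3/2) : ℝ)) := by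
      intro t ht
      rw [Real.mul_rpow (le_of_lt hr2) (le_of_lt ht)]
      ring
    rw [setIntegral_congr_fun measurableSet_Ioi expand] at key
    rw [integral_const_mul] at key
    have hpow : ((r^2 : ℝ) ^ (-(3/2) : ℝ))⁻¹ * (r^2 : ℝ)⁻¹ = r := by
      have h1 : (r^2 : ℝ) ^ (-(3/2) : ℝ) = r ^ (-3 : ℝ) := by
        rw [← Real.rpow_natCast r 2, ← Real.rpow_mul (le_of_lt hr)]
        norm_num
      have h2 : ((r ^ (-3:ℝ))⁻¹ : ℝ) = r ^ (3:ℝ) := by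
        rw [← Real.rpow_neg (le_of_lt hr)]; norm_num
      have h3 : ((r^2 : ℝ))⁻¹ = r ^ (-2:ℝ) := by
        rw [Real.rpow_neg (le_of_lt hr)]
        congr 1
        rw [← Real.rpow_natCast r 2]; norm_num
      rw [h1, h2, h3, ← Real.rpow_add hr]
      norm_num
    have hne : ((r^2 : ℝ) ^ (-(3/2) : ℝ)) ≠ 0 := ne_of_gt (Real.rpow_pos_of_pos hr2 _)
    rw [smul_eq_mul] at key
    calc ∫ t in Ioi (0:ℝ), (1 - Real.exp (-(r^2 * t))) * t ^ (-(3/2) : ℝ)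
        = ((r^2 : ℝ) ^ (-(3/2) : ℝ))⁻¹ * ((r^2 : ℝ) ^ (-(3/2) : ℝ)
            * ∫ t in Ioi (0:ℝ), (1 - Real.exp (-(r^2 * t))) * t ^ (-(3/2) : ℝ)) := by
          rw [← mul_assoc, inv_mul_cancel₀ hne, one_mul]
      _ = ((r^2 : ℝ) ^ (-(3/2) : ℝ))⁻¹ * ((r^2)⁻¹ * laplaceC) := by rw [key]; rfl
      _ = r * laplaceC := by rw [← mul_assoc, hpow]

/-- The Euclidean norm is conditionally negative definite. -/
lemma norm_cnd {n q : ℕ} (x : Fin q → EuclideanSpace ℝ (Fin n)) (α : Fin q → ℝ)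
    (hsum : ∑ i, α i = 0) :
    ∑ i, ∑ j, α i * α j * ‖x i - x j‖ ≤ 0 := by
  set p : ℝ := -(3/2) with hp
  set f : Fin q → Fin q → ℝ → ℝ :=
    fun i j t => α i * α j * ((1 - Real.exp (-(‖x i - x j‖^2 * t))) * t ^ p) with hf
  have hfint : ∀ i j : Fin q, IntegrableOn (f i j) (Ioi 0) := fun i j =>
    (integ_aux (‖x i - x j‖^2) (by positivity)).const_mul _
  -- each double-sum entry
  have hentry : ∀ i j : Fin q, α i * α j * (‖x i - x j‖ * laplaceC)
      = ∫ t in Ioi (0:ℝ), f i j t := by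
    intro i j
    rw [hf]
    simp only
    rw [MeasureTheory.integral_const_mul, scaling _ (norm_nonneg _)]
  have hswap : ∑ i, ∑ j, α i * α j * (‖x i - x j‖ * laplaceC)
      = ∫ t in Ioi (0:ℝ), ∑ i, ∑ j, f i j t := by
    rw [MeasureTheory.integral_finset_sum _ (fun i _ =>
      integrable_finset_sum _ (fun j _ => hfint i j))]
    refine Finset.sum_congr rfl fun i _ => ?_
    rw [MeasureTheory.integral_finset_sum _ (fun j _ => hfint i j)]
    exact Finset.sum_congr rfl fun j _ => hentry i j
  have hptwise : ∀ t ∈ Ioi (0:ℝ), ∑ i, ∑ j, f i j t ≤ 0 := by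
    intro t ht
    have ht' : (0:ℝ) < t := ht
    have hgauss := gaussian_psd x α ht'.le
    have htp : 0 ≤ t ^ p := Real.rpow_nonneg ht'.le _
    have expand : ∑ i, ∑ j, f i j t
        = ((∑ i, α i) * (∑ j, α j)) * t ^ p
          - (∑ i, ∑ j, α i * α j * Real.exp (-(t * ‖x i - x j‖ ^ 2))) * t ^ p := by
      rw [Finset.sum_mul_sum]
      simp only [Finset.sum_mul, ← Finset.sum_sub_distrib]
      refine Finset.sum_congr rfl fun i _ => Finset.sum_congr rfl fun j _ => ?_
      rw [hf]
      simp only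
      rw [mul_comm t (‖x i - x j‖ ^ 2)]
      ring
    rw [expand, hsum]
    have : 0 ≤ (∑ i, ∑ j, α i * α j * Real.exp (-(t * ‖x i - x j‖ ^ 2))) * t ^ p :=
      mul_nonneg hgauss htp
    linarith
  have hle : ∫ t in Ioi (0:ℝ), ∑ i, ∑ j, f i j t ≤ 0 :=
    setIntegral_nonpos measurableSet_Ioi hptwise
  have hfinal : (∑ i, ∑ j, α i * α j * ‖x i - x j‖) * laplaceC ≤ 0 := by
    have : (∑ i, ∑ j, α i * α j * ‖x i - x j‖) * laplaceC
        = ∑ i, ∑ j, α i * α j * (‖x i - x j‖ * laplaceC) := by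
      rw [Finset.sum_mul]
      refine Finset.sum_congr rfl fun i _ => ?_
      rw [Finset.sum_mul]
      exact Finset.sum_congr rfl fun j _ => by ring
    rw [this, hswap]
    exact hle
  nlinarith [laplaceC_pos]

/-- The kernel `‖x‖ + ‖y‖ - ‖x - y‖` is PSD. -/
lemma shifted_psd {n q : ℕ} (x : Fin q → EuclideanSpace ℝ (Fin n)) (α : Fin q → ℝ) :
    0 ≤ ∑ i, ∑ j, α i * α j * (‖x i‖ + ‖x j‖ - ‖x i - x j‖) := by
  set S : ℝ := ∑ i, α i with hS
  set y : Fin (q + 1) → EuclideanSpace ℝ (Fin n) := Fin.snoc x 0 with hy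
  set β : Fin (q + 1) → ℝ := Fin.snoc α (-S) with hβ
  have hsum : ∑ i, β i = 0 := by
    rw [hβ, Fin.sum_univ_castSucc]
    simp [Fin.snoc_castSucc, Fin.snoc_last, hS]
  have hcnd := norm_cnd y β hsum
  have expand : ∑ i, ∑ j, β i * β j * ‖y i - y j‖
      = ∑ i, ∑ j, α i * α j * ‖x i - x j‖
        - S * ∑ i, α i * ‖x i‖ - S * ∑ j, α j * ‖x j‖ := by
    rw [Fin.sum_univ_castSucc]
    have inner1 : ∀ i : Fin q, ∑ j, β (Fin.castSucc i) * β j * ‖y (Fin.castSucc i) - y j‖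
        = ∑ j, α i * α j * ‖x i - x j‖ + α i * (-S) * ‖x i‖ := by
      intro i
      rw [Fin.sum_univ_castSucc]
      simp [hy, hβ, Fin.snoc_castSucc, Fin.snoc_last, sub_zero]
    have inner2 : ∑ j, β (Fin.last q) * β j * ‖y (Fin.last q) - y j‖
        = ∑ j, (-S) * α j * ‖x j‖ := by
      rw [Fin.sum_univ_castSucc]
      simp [hy, hβ, Fin.snoc_castSucc, Fin.snoc_last, zero_sub, norm_neg]
    rw [inner2]
    rw [Finset.sum_congr rfl fun i _ => inner1 i]
    rw [Finset.sum_add_distrib]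
    have h1 : ∑ i, α i * (-S) * ‖x i‖ = -S * ∑ i, α i * ‖x i‖ := by
      rw [Finset.mul_sum]
      exact Finset.sum_congr rfl fun i _ => by ring
    have h2 : ∑ j, (-S) * α j * ‖x j‖ = -S * ∑ j, α j * ‖x j‖ := by
      rw [Finset.mul_sum]
      exact Finset.sum_congr rfl fun j _ => by ring
    rw [h1, h2]
    ring
  rw [expand] at hcnd
  have htarget : ∑ i, ∑ j, α i * α j * (‖x i‖ + ‖x j‖ - ‖x i - x j‖)
      = S * ∑ i, α i * ‖x i‖ + S * ∑ j, α j * ‖x j‖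
        - ∑ i, ∑ j, α i * α j * ‖x i - x j‖ := by
    have : ∀ i : Fin q, ∑ j, α i * α j * (‖x i‖ + ‖x j‖ - ‖x i - x j‖)
        = α i * ‖x i‖ * S + α i * ∑ j, α j * ‖x j‖
          - ∑ j, α i * α j * ‖x i - x j‖ := by
      intro i
      rw [hS, Finset.mul_sum, Finset.mul_sum,
        ← Finset.sum_add_distrib, ← Finset.sum_sub_distrib]
      exact Finset.sum_congr rfl fun j _ => by ring
    rw [Finset.sum_congr rfl fun i _ => this i]
    rw [Finset.sum_sub_distrib, Finset.sum_add_distrib]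
    have h1 : ∑ i, α i * ‖x i‖ * S = S * ∑ i, α i * ‖x i‖ := by
      rw [Finset.mul_sum]
      exact Finset.sum_congr rfl fun i _ => by ring
    have h2 : ∑ i, α i * ∑ j, α j * ‖x j‖ = S * ∑ j, α j * ‖x j‖ := by
      rw [← Finset.sum_mul, ← hS]
    rw [h1, h2]
  rw [htarget]
  linarith

/-- The Laplace kernel `K(x,y) = exp(-‖x-y‖₂/σ²)` on `ℝⁿ` is positive
semidefinite for every `σ ≠ 0`. -/
theorem laplace_kernel_posSemidef (n : ℕ) (σ : ℝ) (hσ : σ ≠ 0)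
    (q : ℕ) (x : Fin q → EuclideanSpace ℝ (Fin n)) (α : Fin q → ℝ) :
    0 ≤ ∑ i, ∑ j, α i * α j * Real.exp (-‖x i - x j‖ / σ ^ 2) := by
  have hσ2 : (0:ℝ) < σ ^ 2 := by positivity
  set τ : ℝ := (σ ^ 2)⁻¹ with hτ
  have hτpos : 0 < τ := inv_pos.mpr hσ2
  set M : Fin q → Fin q → ℝ := fun i j => ‖x i‖ + ‖x j‖ - ‖x i - x j‖ with hM
  have hsymm : ∀ i j, M i j = M j i := by
    intro i j
    simp only [hM]
    rw [norm_sub_rev]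
    ring
  obtain ⟨B, hB⟩ := psd_to_gram M hsymm (fun β => shifted_psd x β)
  have hexp : ∀ i j : Fin q, Real.exp (-‖x i - x j‖ / σ ^ 2)
      = Real.exp (-(τ * ‖x i‖)) * Real.exp (-(τ * ‖x j‖))
        * Real.exp (τ * ∑ a, B a i * B a j) := by
    intro i j
    rw [← hB i j, ← Real.exp_add, ← Real.exp_add]
    congr 1
    simp only [hM, hτ]
    rw [div_eq_mul_inv]
    ring
  calc (0:ℝ) ≤ ∑ i, ∑ j, (fun i => α i * Real.exp (-(τ * ‖x i‖))) i
      * (fun i => α i * Real.exp (-(τ * ‖x i‖))) j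
      * Real.exp (τ * ∑ a, (fun i a => B a i) i a * (fun i a => B a i) j a) :=
      exp_gram_psd (fun i a => B a i) _ hτpos.le
    _ = ∑ i, ∑ j, α i * α j * Real.exp (-‖x i - x j‖ / σ ^ 2) := by
      refine Finset.sum_congr rfl fun i _ => Finset.sum_congr rfl fun j _ => ?_
      simp only
      rw [hexp i j]
      ring
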